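/- arXiv:1601.06689 — 3 statements merged into one kernel-verified Lean document; each statement's English description precedes it below -/
import Mathlib

section
/- Let F be any field and let V_1,…,V_n ∈ F^2 be vectors under which all conflicts of an index coding problem are resolved. Then for any two messages i and i' lying in the same alignment set, the vectors V_i and V_{i'} span a one-dimensional space; i.e., each is a nonzero scalar multiple of the other. -/
/-!
Common definitions: an index coding problem with `n` messages (indexed by `Fin n`),
`T ≥ 1` receivers, demand sets `D j` and side-information sets `S j`.
-/

/-- An index coding problem with `n` messages. -/
structure ICP (n : ℕ) where
  T : ℕ
  hT : 1 ≤ T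
  D : Fin T → Finset (Fin n)
  S : Fin T → Finset (Fin n)
  hDS : ∀ j, Disjoint (D j) (S j)

namespace ICP

variable {n : ℕ}

/-- The interfering set `Interf_k(j)`: all messages other than `k` not in the side
information of receiver `j`, provided `k ∈ D j`; empty otherwise. -/
def Interf (P : ICP n) (k : Fin n) (j : Fin P.T) : Finset (Fin n) :=
  if k ∈ P.D j then Finset.univ \ insert k (P.S j) else ∅

/-- All conflicts are resolved by the assignment `V` of `L`-length vectors over `F`
to the messages: for every message `k` and receiver `j`, `V k` is outside the span of
the vectors assigned to `Interf_k(j)`. -/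
def Resolved (P : ICP n) (F : Type) [Field F] {L : ℕ} (V : Fin n → Fin L → F) : Prop :=
  ∀ (k : Fin n) (j : Fin P.T),
    V k ∉ Submodule.span F (V '' (P.Interf k j : Set (Fin n)))

/-- Rate `1/L` feasibility: there exist a finite field `F` and an assignment of
`L`-length vectors over `F` resolving all conflicts. -/
def RateFeasible (P : ICP n) (L : ℕ) : Prop :=
  ∃ (F : Type) (_ : Field F) (_ : Fintype F) (V : Fin n → Fin L → F),
    P.Resolved F V

/-- Adjacency in the alignment graph: `i ≠ i'` both interfere at a receiver `j`
demanding some message `k ∉ {i, i'}`. -/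
def AlignAdj (P : ICP n) (i i' : Fin n) : Prop :=
  i ≠ i' ∧ ∃ (j : Fin P.T) (k : Fin n), k ∈ P.D j ∧ k ≠ i ∧ k ≠ i' ∧
    i ∈ P.Interf k j ∧ i' ∈ P.Interf k j

/-- The alignment graph. -/
def alignGraph (P : ICP n) : SimpleGraph (Fin n) where
  Adj := P.AlignAdj
  symm := ⟨by
    rintro a b ⟨hne, j, k, h1, h2, h3, h4, h5⟩
    exact ⟨hne.symm, j, k, h1, h3, h2, h5, h4⟩⟩
  loopless := ⟨by rintro a ⟨hne, -⟩; exact hne rfl⟩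

/-- Two messages lie in the same alignment set (connected component of the
alignment graph). -/
def SameAlignSet (P : ICP n) (i i' : Fin n) : Prop :=
  P.alignGraph.Reachable i i'

/-- Messages `i` and `k` are in conflict. -/
def InConflict (P : ICP n) (i k : Fin n) : Prop :=
  (∃ j, k ∈ P.D j ∧ i ∈ P.Interf k j) ∨ (∃ j, i ∈ P.D j ∧ k ∈ P.Interf i j)

/-- There is an internal conflict: a conflict between two messages lying in the
same alignment set. -/
def HasInternalConflict (P : ICP n) : Prop :=
  ∃ i k, P.InConflict i k ∧ P.SameAlignSet i k

/-- The conflict hypergraph, given as the set of unordered pairs `{{k}, Interf_k(j)}`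
over all receivers `j` and all demands `k ∈ D j`. -/
def conflictHypergraph (P : ICP n) : Set (Sym2 (Finset (Fin n))) :=
  {e | ∃ (j : Fin P.T) (k : Fin n), k ∈ P.D j ∧ e = s({k}, P.Interf k j)}

/-- The problem is groupcast: every message is demanded by at least one receiver. -/
def Groupcast (P : ICP n) : Prop := ∀ k : Fin n, ∃ j, k ∈ P.D j

/-- `i 0, i 1, i 2, i 3` form an acyclic subset of messages of size 4. -/
def AcyclicSubset4 (P : ICP n) (i : Fin 4 → Fin n) : Prop :=
  Function.Injective i ∧
    ∃ j : Fin 4 → Fin P.T, ∀ m : Fin 4, i m ∈ P.D (j m) ∧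
      ∀ m' : Fin 4, m' < m → i m' ∈ P.Interf (i m) (j m)

/-- The alignment set (connected component) of the vertex `v` has both a fork
(a vertex of degree at least 3) and a cycle all of whose vertices lie in it. -/
def HasForkAndCycle (P : ICP n) (v : Fin n) : Prop :=
  (∃ u, P.alignGraph.Reachable v u ∧ 3 ≤ (P.alignGraph.neighborSet u).ncard) ∧
  (∃ (u : Fin n) (c : P.alignGraph.Walk u u), c.IsCycle ∧
      ∀ x ∈ c.support, P.alignGraph.Reachable v x)

/-- A triangular interfering set: a 3-element set of messages simultaneously
interfering at some receiver, at least two of which are in conflict. -/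
def TriangularSet (P : ICP n) (W : Finset (Fin n)) : Prop :=
  W.card = 3 ∧ (∃ (j : Fin P.T) (k : Fin n), k ∈ P.D j ∧ W ⊆ P.Interf k j) ∧
    ∃ i i', i ∈ W ∧ i' ∈ W ∧ i ≠ i' ∧ P.InConflict i i'

/-- Two distinct triangular interfering sets are adjacent: they meet in exactly
two messages which are in conflict. -/
def TriAdj (P : ICP n) (W1 W2 : Finset (Fin n)) : Prop :=
  P.TriangularSet W1 ∧ P.TriangularSet W2 ∧ W1 ≠ W2 ∧
    ∃ i i', i ≠ i' ∧ W1 ∩ W2 = {i, i'} ∧ P.InConflict i i'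

/-- Two triangular interfering sets are connected: some finite sequence of
triangular interfering sets, with consecutive members adjacent, joins them. -/
def TriConnected (P : ICP n) (W1 W2 : Finset (Fin n)) : Prop :=
  P.TriangularSet W1 ∧ P.TriangularSet W2 ∧ Relation.ReflTransGen P.TriAdj W1 W2

/-- `W'` is a type-2 alignment set: the union of a maximal family of pairwise
connected triangular interfering sets. -/
def IsType2AlignSet (P : ICP n) (W' : Finset (Fin n)) : Prop :=
  ∃ 𝒯 : Set (Finset (Fin n)), 𝒯.Nonempty ∧
    (∀ W ∈ 𝒯, P.TriangularSet W) ∧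
    (∀ W1 ∈ 𝒯, ∀ W2 ∈ 𝒯, P.TriConnected W1 W2) ∧
    (∀ 𝒯' : Set (Finset (Fin n)), 𝒯 ⊆ 𝒯' → (∀ W ∈ 𝒯', P.TriangularSet W) →
      (∀ W1 ∈ 𝒯', ∀ W2 ∈ 𝒯', P.TriConnected W1 W2) → 𝒯' = 𝒯) ∧
    (W' : Set (Fin n)) = ⋃ W ∈ 𝒯, (W : Set (Fin n))

/-- The interfering set of message `k` at receiver `j` in the `W'`-restricted
index coding problem (its demand sets are `D j ∩ W'`, side information `S j ∩ W'`,
and message set `W'`). -/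
def rInterf (P : ICP n) (W' : Finset (Fin n)) (k : Fin n) (j : Fin P.T) :
    Finset (Fin n) :=
  if k ∈ P.D j ∩ W' then P.Interf k j ∩ W' else ∅

/-- Adjacency in the alignment graph of the `W'`-restricted problem. -/
def rAlignAdj (P : ICP n) (W' : Finset (Fin n)) (i i' : Fin n) : Prop :=
  i ≠ i' ∧ ∃ (j : Fin P.T) (k : Fin n), k ∈ P.D j ∩ W' ∧ k ≠ i ∧ k ≠ i' ∧
    i ∈ P.rInterf W' k j ∧ i' ∈ P.rInterf W' k j

/-- The alignment graph of the `W'`-restricted problem (messages outside `W'`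
are isolated vertices). -/
def rAlignGraph (P : ICP n) (W' : Finset (Fin n)) : SimpleGraph (Fin n) where
  Adj := P.rAlignAdj W'
  symm := ⟨by
    rintro a b ⟨hne, j, k, h1, h2, h3, h4, h5⟩
    exact ⟨hne.symm, j, k, h1, h3, h2, h5, h4⟩⟩
  loopless := ⟨by rintro a ⟨hne, -⟩; exact hne rfl⟩

/-- Conflict in the `W'`-restricted problem. -/
def rInConflict (P : ICP n) (W' : Finset (Fin n)) (i k : Fin n) : Prop :=
  (∃ j, k ∈ P.D j ∩ W' ∧ i ∈ P.rInterf W' k j) ∨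
  (∃ j, i ∈ P.D j ∩ W' ∧ k ∈ P.rInterf W' i j)

/-- There is a `W'`-restricted internal conflict: a conflict of the restricted
problem between two messages in the same `W'`-restricted alignment set. -/
def HasRestrictedInternalConflict (P : ICP n) (W' : Finset (Fin n)) : Prop :=
  ∃ i k, i ∈ W' ∧ k ∈ W' ∧ P.rInConflict W' i k ∧ (P.rAlignGraph W').Reachable i k

/-- The `W'`-restricted index coding problem is rate `1/2` feasible: there exist a
finite field `F` and vectors `V i ∈ F²` for `i ∈ W'` such that for every `k ∈ W'`
and every receiver `j`, `V k ∉ span {V i : i ∈ Interf_k(j) ∩ W'}`. -/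
def RestrictedRateHalfFeasible (P : ICP n) (W' : Finset (Fin n)) : Prop :=
  ∃ (F : Type) (_ : Field F) (_ : Fintype F) (V : Fin n → Fin 2 → F),
    ∀ k ∈ W', ∀ j : Fin P.T,
      V k ∉ Submodule.span F (V '' ((P.Interf k j ∩ W') : Set (Fin n)))

end ICP

private lemma resolved_ne_zero {n : ℕ} (P : ICP n) (F : Type) [Field F]
    (V : Fin n → Fin 2 → F) (hres : P.Resolved F V) (k : Fin n) : V k ≠ 0 := by
  have : Nonempty (Fin P.T) := ⟨⟨0, P.hT⟩⟩
  obtain ⟨j⟩ := this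
  intro h0
  exact hres k j (h0 ▸ Submodule.zero_mem _)

private lemma adj_span_eq {n : ℕ} (P : ICP n) (F : Type) [Field F]
    (V : Fin n → Fin 2 → F) (hres : P.Resolved F V)
    {i i' : Fin n} (h : P.alignGraph.Adj i i') :
    Submodule.span F ({V i} : Set (Fin 2 → F)) = Submodule.span F {V i'} := by
  obtain ⟨hne, j, k, hk, hki, hki', hi, hi'⟩ := h
  have hnli : ¬ LinearIndependent F ![V i, V i'] := by
    intro hli
    have hcard : Fintype.card (Fin 2) = Module.finrank F (Fin 2 → F) := by
      simp [Module.finrank_fin_fun]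
    have htop := hli.span_eq_top_of_card_eq_finrank hcard
    have hrange : Set.range ![V i, V i'] = {V i, V i'} := by
      ext x
      simp only [Matrix.range_cons, Matrix.range_empty, Set.union_empty,
        Set.union_singleton, Set.mem_insert_iff, Set.mem_singleton_iff]
      tauto
    rw [hrange] at htop
    have hsub : ({V i, V i'} : Set (Fin 2 → F)) ⊆ V '' (P.Interf k j : Set (Fin n)) := by
      rintro x (rfl | rfl)
      · exact ⟨i, hi, rfl⟩
      · exact ⟨i', hi', rfl⟩
    have : V k ∈ Submodule.span F (V '' (P.Interf k j : Set (Fin n))) := by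
      have := Submodule.span_mono (R := F) hsub
      rw [htop] at this
      exact this Submodule.mem_top
    exact hres k j this
  rw [linearIndependent_fin2] at hnli
  push_neg at hnli
  simp only [Matrix.cons_val_one, Matrix.head_cons, Matrix.cons_val_zero] at hnli
  obtain ⟨a, ha⟩ := hnli (resolved_ne_zero P F V hres i')
  have ha0 : a ≠ 0 := by
    intro h0
    exact resolved_ne_zero P F V hres i (by rw [← ha, h0, zero_smul])
  rw [← ha]
  exact Submodule.span_singleton_smul_eq (IsUnit.mk0 a ha0) _

/-- If length-2 vectors `V` resolve all conflicts, then any two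
messages in the same alignment set are assigned vectors spanning a one-dimensional
space. -/
theorem sameAlignSet_span_one_dim {n : ℕ} (P : ICP n) (F : Type) [Field F]
    (V : Fin n → Fin 2 → F) (hres : P.Resolved F V)
    (i i' : Fin n) (h : P.SameAlignSet i i') :
    Module.finrank F (Submodule.span F ({V i, V i'} : Set (Fin 2 → F))) = 1 := by
  have hspan : Submodule.span F ({V i} : Set (Fin 2 → F)) = Submodule.span F {V i'} := by
    obtain ⟨w⟩ := h
    induction w with
    | nil => rfl
    | cons hadj p ih => exact (adj_span_eq P F V hres hadj).trans ih
  have : Submodule.span F ({V i, V i'} : Set (Fin 2 → F)) =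
      Submodule.span F ({V i} : Set (Fin 2 → F)) := by
    rw [Set.insert_eq, Submodule.span_union, hspan, sup_idem]
  rw [this, finrank_span_singleton (resolved_ne_zero P F V hres i)]
end

section
/- If an index coding problem is rate 1/3 feasible (i.e., there exist a field F and vectors V_1,…,V_n ∈ F^3 under which all conflicts are resolved), then it has no acyclic subset of messages of size 4. -/
/-- A rate `1/3` feasible index coding problem has no acyclic
subset of messages of size 4. -/
theorem rateThird_no_acyclic_subset {n : ℕ} (P : ICP n)
    (h : ∃ (F : Type) (_ : Field F) (V : Fin n → Fin 3 → F), P.Resolved F V) :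
    ¬ ∃ i : Fin 4 → Fin n, P.AcyclicSubset4 i := by
  rintro ⟨i, -, j, hij⟩
  obtain ⟨F, _, V, hV⟩ := h
  set Sp : ℕ → Submodule F (Fin 3 → F) :=
    fun m => Submodule.span F (V '' (i '' {m' : Fin 4 | m'.val < m})) with hSp
  have step : ∀ m : Fin 4, Sp m.val < Sp (m.val + 1) := by
    intro m
    refine lt_of_le_of_ne ?_ ?_
    · exact Submodule.span_mono (Set.image_mono (Set.image_mono
        (fun m' hm' => Nat.lt_succ_of_lt hm')))
    · intro heq
      have hmem : V (i m) ∈ Sp (m.val + 1) :=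
        Submodule.subset_span ⟨i m, ⟨m, Nat.lt_succ_self _, rfl⟩, rfl⟩
      rw [← heq] at hmem
      have hle : Sp m.val ≤ Submodule.span F (V '' (P.Interf (i m) (j m) : Set (Fin n))) := by
        apply Submodule.span_mono
        rintro _ ⟨_, ⟨m', hm', rfl⟩, rfl⟩
        exact ⟨i m', (hij m).2 m' (Fin.lt_def.mpr hm'), rfl⟩
      exact hV (i m) (j m) (hle hmem)
  have step' : ∀ m : ℕ, m < 4 → Sp m < Sp (m+1) := fun m hm => step ⟨m, hm⟩
  have f1 : Module.finrank F (Sp 0) < Module.finrank F (Sp 1) := Submodule.finrank_lt_finrank_of_lt (step' 0 (by norm_num))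
  have f2 : Module.finrank F (Sp 1) < Module.finrank F (Sp 2) := Submodule.finrank_lt_finrank_of_lt (step' 1 (by norm_num))
  have f3 : Module.finrank F (Sp 2) < Module.finrank F (Sp 3) := Submodule.finrank_lt_finrank_of_lt (step' 2 (by norm_num))
  have f4 : Module.finrank F (Sp 3) < Module.finrank F (Sp 4) := Submodule.finrank_lt_finrank_of_lt (step' 3 (by norm_num))
  have hle : Module.finrank F (Sp 4) ≤ Module.finrank F (Fin 3 → F) :=
    Submodule.finrank_le _
  rw [Module.finrank_fin_fun] at hle
  omega
end

section
/- For an index coding problem and a subset W' ⊆ {1,…,n}, the W'-restricted index coding problem I_{W'} is rate 1/2 feasible (i.e., there exist a finite field F and vectors V_i ∈ F^2 for i ∈ W' such that for every k ∈ W' and every receiver j, V_k ∉ span{V_i : i ∈ Interf_k(j) ∩ W'}) if and only if there are no W'-restricted internal conflicts. -/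
section Det2Helpers

variable {F : Type} [Field F]

/-- 2x2 determinant of two vectors in `F²`. -/
def det2 (a b : Fin 2 → F) : F := a 0 * b 1 - a 1 * b 0

lemma det2_self (a : Fin 2 → F) : det2 a a = 0 := by unfold det2; ring

lemma det2_comm_zero {a b : Fin 2 → F} (h : det2 a b = 0) : det2 b a = 0 := by
  unfold det2 at h ⊢; linear_combination -h

lemma ne_zero_coord {a : Fin 2 → F} (ha : a ≠ 0) : a 0 ≠ 0 ∨ a 1 ≠ 0 := by
  by_contra hc
  push_neg at hc
  apply ha
  funext t
  fin_cases t
  · exact hc.1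
  · exact hc.2

lemma span_pair_of_det2_ne_zero {a b : Fin 2 → F} (h : det2 a b ≠ 0) (v : Fin 2 → F) :
    v ∈ Submodule.span F ({a, b} : Set (Fin 2 → F)) := by
  rw [Submodule.mem_span_pair]
  refine ⟨(v 0 * b 1 - v 1 * b 0) / det2 a b, (a 0 * v 1 - a 1 * v 0) / det2 a b, ?_⟩
  unfold det2 at h ⊢
  funext t
  fin_cases t <;>
    simp only [Fin.zero_eta, Fin.mk_one, Fin.isValue, Pi.add_apply, Pi.smul_apply,
      smul_eq_mul] <;>
    rw [div_mul_eq_mul_div, div_mul_eq_mul_div, ← add_div, div_eq_iff h] <;> ring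

lemma mem_span_singleton_of_det2 {a b : Fin 2 → F} (ha : a ≠ 0) (h : det2 a b = 0) :
    b ∈ Submodule.span F ({a} : Set (Fin 2 → F)) := by
  rw [Submodule.mem_span_singleton]
  unfold det2 at h
  rcases ne_zero_coord ha with h0 | h1
  · refine ⟨b 0 / a 0, ?_⟩
    funext t
    fin_cases t <;>
      simp only [Fin.zero_eta, Fin.mk_one, Fin.isValue, Pi.smul_apply, smul_eq_mul]
    · field_simp
    · field_simp
      linear_combination -h
  · refine ⟨b 1 / a 1, ?_⟩
    funext t
    fin_cases t <;>
      simp only [Fin.zero_eta, Fin.mk_one, Fin.isValue, Pi.smul_apply, smul_eq_mul]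
    · field_simp
      linear_combination h
    · field_simp

lemma det2_trans {a b c : Fin 2 → F} (hb : b ≠ 0) (h1 : det2 a b = 0) (h2 : det2 b c = 0) :
    det2 a c = 0 := by
  unfold det2 at h1 h2 ⊢
  rcases ne_zero_coord hb with h | h
  · have key : b 0 * (a 0 * c 1 - a 1 * c 0) = 0 := by
      linear_combination a 0 * h2 + c 0 * h1
    rcases mul_eq_zero.mp key with h' | h'
    · exact absurd h' h
    · exact h'
  · have key : b 1 * (a 0 * c 1 - a 1 * c 0) = 0 := by
      linear_combination c 1 * h1 + a 1 * h2
    rcases mul_eq_zero.mp key with h' | h'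
    · exact absurd h' h
    · exact h'

end Det2Helpers

/-- The `W'`-restricted index coding problem is rate `1/2`
feasible iff there are no `W'`-restricted internal conflicts. -/
theorem restricted_rateHalf_iff_no_restricted_internal_conflict {n : ℕ}
    (P : ICP n) (W' : Finset (Fin n)) :
    P.RestrictedRateHalfFeasible W' ↔ ¬ P.HasRestrictedInternalConflict W' := by
  constructor
  · rintro ⟨F, _, _, V, hV⟩ ⟨i, k, hi, hk, hconf, hreach⟩
    simp only [← Finset.coe_inter] at hV
    have hT0 : (0 : ℕ) < P.T := P.hT
    -- all vectors of messages in W' are nonzero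
    have hne : ∀ a ∈ W', V a ≠ 0 := by
      intro a ha h0
      exact hV a ha ⟨0, hT0⟩ (h0 ▸ Submodule.zero_mem _)
    -- second endpoints of edges are in W'
    have hedgeW : ∀ a b, (P.rAlignGraph W').Adj a b → b ∈ W' := by
      rintro a b ⟨hab, j, m, hm, _, _, ha, hb⟩
      have hb' : b ∈ P.Interf m j ∩ W' := by
        simpa [ICP.rInterf, hm] using hb
      exact (Finset.mem_inter.mp hb').2
    -- edges force aligned vectors
    have hedge : ∀ a b, (P.rAlignGraph W').Adj a b → det2 (V a) (V b) = 0 := by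
      rintro a b ⟨hab, j, m, hm, _, _, ha, hb⟩
      by_contra hd
      have hmW : m ∈ W' := (Finset.mem_inter.mp hm).2
      have ha' : a ∈ P.Interf m j ∩ W' := by
        simpa [ICP.rInterf, hm] using ha
      have hb' : b ∈ P.Interf m j ∩ W' := by
        simpa [ICP.rInterf, hm] using hb
      have hsub : ({V a, V b} : Set (Fin 2 → F)) ⊆
          V '' ((P.Interf m j ∩ W' : Finset (Fin n)) : Set (Fin n)) := by
        rintro x (rfl | rfl)
        · exact ⟨a, by exact_mod_cast ha', rfl⟩
        · exact ⟨b, by exact_mod_cast hb', rfl⟩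
      exact hV m hmW j (Submodule.span_mono hsub (span_pair_of_det2_ne_zero hd (V m)))
    -- reachability forces aligned vectors
    have hwalk : ∀ {a b : Fin n}, (P.rAlignGraph W').Walk a b → det2 (V a) (V b) = 0 := by
      intro a b w
      induction w with
      | nil => exact det2_self _
      | cons h p ih =>
        exact det2_trans (hne _ (hedgeW _ _ h)) (hedge _ _ h) ih
    obtain ⟨w⟩ := hreach
    have hik : det2 (V i) (V k) = 0 := hwalk w
    rcases hconf with ⟨j, hkD, hiI⟩ | ⟨j, hiD, hkI⟩
    · have hiI' : i ∈ P.Interf k j ∩ W' := by simpa [ICP.rInterf, hkD] using hiI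
      have hkW : k ∈ W' := (Finset.mem_inter.mp hkD).2
      have hsub : ({V i} : Set (Fin 2 → F)) ⊆
          V '' ((P.Interf k j ∩ W' : Finset (Fin n)) : Set (Fin n)) := by
        rintro x rfl
        exact ⟨i, by exact_mod_cast hiI', rfl⟩
      exact hV k hkW j
        (Submodule.span_mono hsub (mem_span_singleton_of_det2 (hne i hi) hik))
    · have hkI' : k ∈ P.Interf i j ∩ W' := by simpa [ICP.rInterf, hiD] using hkI
      have hiW : i ∈ W' := (Finset.mem_inter.mp hiD).2
      have hki : det2 (V k) (V i) = 0 := det2_comm_zero hik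
      have hsub : ({V k} : Set (Fin 2 → F)) ⊆
          V '' ((P.Interf i j ∩ W' : Finset (Fin n)) : Set (Fin n)) := by
        rintro x rfl
        exact ⟨k, by exact_mod_cast hkI', rfl⟩
      exact hV i hiW j
        (Submodule.span_mono hsub (mem_span_singleton_of_det2 (hne k hk) hki))
  · intro hno
    obtain ⟨p, hpn, hp⟩ := Nat.exists_infinite_primes (n + 1)
    haveI : Fact p.Prime := ⟨hp⟩
    set G := P.rAlignGraph W' with hG
    set comp : Fin n → Fin n := fun a => (G.connectedComponentMk a).out with hcomp
    have hcomp_eq : ∀ a b, G.Reachable a b → comp a = comp b := by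
      intro a b h
      simp only [hcomp]
      rw [SimpleGraph.ConnectedComponent.sound h]
    have hcomp_inj : ∀ a b, comp a = comp b → G.Reachable a b := by
      intro a b h
      apply SimpleGraph.ConnectedComponent.exact
      have h2 := congrArg (Quot.mk G.Reachable) h
      exact (Quot.out_eq _).symm.trans (h2.trans (Quot.out_eq _))
    set V : Fin n → Fin 2 → ZMod p := fun a => ![1, ((comp a : ℕ) : ZMod p)] with hVdef
    refine ⟨ZMod p, inferInstance, inferInstance, V, ?_⟩
    intro k hk j hmem
    rw [← Finset.coe_inter] at hmem
    rcases Finset.eq_empty_or_nonempty (P.Interf k j ∩ W') with hA | ⟨i₀, hi₀⟩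
    · rw [hA] at hmem
      simp only [Finset.coe_empty, Set.image_empty, Submodule.span_empty,
        Submodule.mem_bot] at hmem
      have h10 : (1 : ZMod p) = 0 := by
        have := congrFun hmem 0
        simp only [hVdef] at this
        simpa using this.symm
      exact one_ne_zero h10
    · have hi₀I : i₀ ∈ P.Interf k j := (Finset.mem_inter.mp hi₀).1
      have hi₀W : i₀ ∈ W' := (Finset.mem_inter.mp hi₀).2
      have hkD : k ∈ P.D j := by
        by_contra h
        simp [ICP.Interf, h] at hi₀I
      have hkDW : k ∈ P.D j ∩ W' := Finset.mem_inter.mpr ⟨hkD, hk⟩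
      have hknotI : ∀ a, a ∈ P.Interf k j → k ≠ a := by
        intro a ha hka
        subst hka
        simp [ICP.Interf, hkD] at ha
      -- all vectors over the interfering set coincide with V i₀
      have hconst : ∀ a ∈ P.Interf k j ∩ W', V a = V i₀ := by
        intro a ha
        rcases eq_or_ne a i₀ with rfl | hne'
        · rfl
        · have hadj : G.Adj a i₀ := by
            refine ⟨hne', j, k, hkDW, hknotI a (Finset.mem_inter.mp ha).1,
              hknotI i₀ hi₀I, ?_, ?_⟩
            · simpa [ICP.rInterf, hkDW] using ha
            · simpa [ICP.rInterf, hkDW] using hi₀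
          have hce := hcomp_eq a i₀ hadj.reachable
          simp only [hVdef, hce]
      have himg : V '' ((P.Interf k j ∩ W' : Finset (Fin n)) : Set (Fin n)) =
          {V i₀} := by
        apply Set.Subset.antisymm
        · rintro x ⟨a, ha, rfl⟩
          exact hconst a (by exact_mod_cast ha)
        · rintro x rfl
          exact ⟨i₀, by exact_mod_cast hi₀, rfl⟩
      rw [himg, Submodule.mem_span_singleton] at hmem
      obtain ⟨c, hc⟩ := hmem
      have hc0 : c = 1 := by
        have := congrFun hc 0
        simpa [hVdef] using this
      subst hc0
      have hc1 : ((comp i₀ : ℕ) : ZMod p) = ((comp k : ℕ) : ZMod p) := by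
        have := congrFun hc 1
        simpa [hVdef] using this
      have hcompeq : comp i₀ = comp k := by
        have h1 : ((comp i₀ : ℕ) : ZMod p).val = ((comp k : ℕ) : ZMod p).val := by
          rw [hc1]
        rw [ZMod.val_cast_of_lt (lt_of_lt_of_le (comp i₀).isLt (by omega)),
          ZMod.val_cast_of_lt (lt_of_lt_of_le (comp k).isLt (by omega))] at h1
        exact Fin.ext h1
      have hreach : G.Reachable i₀ k := hcomp_inj i₀ k hcompeq
      apply hno
      refine ⟨i₀, k, hi₀W, hk, Or.inl ⟨j, hkDW, ?_⟩, hreach⟩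
      simpa [ICP.rInterf, hkDW] using hi₀
end
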